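/- arXiv:1508.02990 — 5 statements merged into one kernel-verified Lean document; each statement's English description precedes it below -/
import Mathlib

section
/- Piola identity: if y : ℝ³ → ℝ³ is twice continuously differentiable, then every row of the cofactor matrix of its Jacobian is divergence-free; that is, for every x ∈ ℝ³ and every index i ∈ {1,2,3}, ∑_{j=1}^{3} ∂_j ( (cof ∇y(x))_{ij} ) = 0. -/
open MeasureTheory Matrix

/-- Cofactor matrix: the transpose of the adjugate, so that `A * (cof A)ᵀ = det A • 1`. -/
noncomputable def cof (A : Matrix (Fin 3) (Fin 3) ℝ) : Matrix (Fin 3) (Fin 3) ℝ :=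
  (Matrix.adjugate A)ᵀ

/-- Jacobian matrix of `y` at `x`: entries `(∇y(x))_{kp} = ∂y_k/∂x_p(x)`. -/
noncomputable def jac (y : (Fin 3 → ℝ) → Fin 3 → ℝ) (x : Fin 3 → ℝ) :
    Matrix (Fin 3) (Fin 3) ℝ :=
  Matrix.of fun k p => fderiv ℝ y x (Pi.single p 1) k

/-- Partial derivative of a scalar function in the `j`-th coordinate direction. -/
noncomputable def pd (j : Fin 3) (f : (Fin 3 → ℝ) → ℝ) (x : Fin 3 → ℝ) : ℝ :=
  fderiv ℝ f x (Pi.single j 1)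

/-- Entry of the Jacobian as a function of the base point: `gg y p k z = ∂y_k/∂x_p (z)`. -/
noncomputable def gg (y : (Fin 3 → ℝ) → Fin 3 → ℝ) (p k : Fin 3) (z : Fin 3 → ℝ) : ℝ :=
  fderiv ℝ y z (Pi.single p 1) k

lemma gg_diff {y : (Fin 3 → ℝ) → Fin 3 → ℝ} (hy : ContDiff ℝ 2 y) (p k : Fin 3)
    (z : Fin 3 → ℝ) : DifferentiableAt ℝ (gg y p k) z := by
  have hF : Differentiable ℝ (fderiv ℝ y) :=
    (hy.fderiv_right (m := 1) (by norm_num)).differentiable (by norm_num)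
  exact (((ContinuousLinearMap.proj k).comp
    (ContinuousLinearMap.apply ℝ (Fin 3 → ℝ) (Pi.single p 1))).differentiableAt).comp z (hF z)

lemma pd_gg {y : (Fin 3 → ℝ) → Fin 3 → ℝ} (hy : ContDiff ℝ 2 y) (j p k : Fin 3)
    (x : Fin 3 → ℝ) :
    pd j (gg y p k) x = fderiv ℝ (fderiv ℝ y) x (Pi.single j 1) (Pi.single p 1) k := by
  have hF : Differentiable ℝ (fderiv ℝ y) :=
    (hy.fderiv_right (m := 1) (by norm_num)).differentiable (by norm_num)
  set L : ((Fin 3 → ℝ) →L[ℝ] (Fin 3 → ℝ)) →L[ℝ] ℝ :=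
    (ContinuousLinearMap.proj k).comp
      (ContinuousLinearMap.apply ℝ (Fin 3 → ℝ) (Pi.single p 1)) with hL
  have h1 : gg y p k = L ∘ fderiv ℝ y := rfl
  have h2 : fderiv ℝ (gg y p k) x = L.comp (fderiv ℝ (fderiv ℝ y) x) := by
    rw [h1, fderiv_comp x L.differentiableAt (hF x), L.fderiv]
  show fderiv ℝ (gg y p k) x (Pi.single j 1) = _
  rw [h2]
  simp [hL]

lemma cof_apply (A : Matrix (Fin 3) (Fin 3) ℝ) (i j : Fin 3) :
    cof A i j = A (i+1) (j+1) * A (i+2) (j+2) - A (i+1) (j+2) * A (i+2) (j+1) := by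
  fin_cases i <;> fin_cases j <;>
    simp [cof, Matrix.adjugate_fin_three, show (2+1:Fin 3)=0 from rfl,
      show (2+2:Fin 3)=1 from rfl, show (1+2:Fin 3)=0 from rfl] <;> ring

lemma pd_cross {f1 f2 f3 f4 : (Fin 3 → ℝ) → ℝ} {x : Fin 3 → ℝ} (j : Fin 3)
    (h1 : DifferentiableAt ℝ f1 x) (h2 : DifferentiableAt ℝ f2 x)
    (h3 : DifferentiableAt ℝ f3 x) (h4 : DifferentiableAt ℝ f4 x) :
    pd j (fun z => f1 z * f2 z - f3 z * f4 z) x =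
      pd j f1 x * f2 x + f1 x * pd j f2 x - (pd j f3 x * f4 x + f3 x * pd j f4 x) := by
  unfold pd
  rw [fderiv_fun_sub (f := fun z => f1 z * f2 z) (g := fun z => f3 z * f4 z) (h1.mul h2) (h3.mul h4), fderiv_fun_mul h1 h2, fderiv_fun_mul h3 h4]
  simp
  ring

/-- Piola identity: each row of the cofactor of the Jacobian of a C² map is divergence free. -/
theorem piola_identity (y : (Fin 3 → ℝ) → Fin 3 → ℝ) (hy : ContDiff ℝ 2 y)
    (x : Fin 3 → ℝ) (i : Fin 3) :
    ∑ j : Fin 3, pd j (fun z => cof (jac y z) i j) x = 0 := by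
  have hsym : ∀ v w, fderiv ℝ (fderiv ℝ y) x v w = fderiv ℝ (fderiv ℝ y) x w v :=
    hy.contDiffAt.isSymmSndFDerivAt (by norm_num)
  have key : ∀ j : Fin 3, pd j (fun z => cof (jac y z) i j) x =
      fderiv ℝ (fderiv ℝ y) x (Pi.single j 1) (Pi.single (j+1) 1) (i+1) * gg y (j+2) (i+2) x
      + gg y (j+1) (i+1) x * fderiv ℝ (fderiv ℝ y) x (Pi.single j 1) (Pi.single (j+2) 1) (i+2)
      - (fderiv ℝ (fderiv ℝ y) x (Pi.single j 1) (Pi.single (j+2) 1) (i+1) * gg y (j+1) (i+2) x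
      + gg y (j+2) (i+1) x * fderiv ℝ (fderiv ℝ y) x (Pi.single j 1) (Pi.single (j+1) 1) (i+2)) := by
    intro j
    have hfun : (fun z => cof (jac y z) i j) =
        fun z => gg y (j+1) (i+1) z * gg y (j+2) (i+2) z
          - gg y (j+2) (i+1) z * gg y (j+1) (i+2) z := by
      funext z; rw [cof_apply]; rfl
    rw [hfun, pd_cross j (gg_diff hy _ _ _) (gg_diff hy _ _ _) (gg_diff hy _ _ _)
      (gg_diff hy _ _ _), pd_gg hy, pd_gg hy, pd_gg hy, pd_gg hy]
  have s10 : ∀ k, fderiv ℝ (fderiv ℝ y) x (Pi.single (1:Fin 3) 1) (Pi.single (0:Fin 3) 1) k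
      = fderiv ℝ (fderiv ℝ y) x (Pi.single (0:Fin 3) 1) (Pi.single (1:Fin 3) 1) k :=
    fun k => congrFun (hsym _ _) k
  have s20 : ∀ k, fderiv ℝ (fderiv ℝ y) x (Pi.single (2:Fin 3) 1) (Pi.single (0:Fin 3) 1) k
      = fderiv ℝ (fderiv ℝ y) x (Pi.single (0:Fin 3) 1) (Pi.single (2:Fin 3) 1) k :=
    fun k => congrFun (hsym _ _) k
  have s21 : ∀ k, fderiv ℝ (fderiv ℝ y) x (Pi.single (2:Fin 3) 1) (Pi.single (1:Fin 3) 1) k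
      = fderiv ℝ (fderiv ℝ y) x (Pi.single (1:Fin 3) 1) (Pi.single (2:Fin 3) 1) k :=
    fun k => congrFun (hsym _ _) k
  rw [Fin.sum_univ_three, key 0, key 1, key 2]
  simp only [show ((0:Fin 3)+1) = 1 from rfl, show ((0:Fin 3)+2) = 2 from rfl,
    show ((1:Fin 3)+1) = 2 from rfl, show ((1:Fin 3)+2) = 0 from rfl,
    show ((2:Fin 3)+1) = 0 from rfl, show ((2:Fin 3)+2) = 1 from rfl,
    s10, s20, s21]
  ring
end

section
/- Weak form of the Piola identity: if y : ℝ³ → ℝ³ is twice continuously differentiable and v : ℝ³ → ℝ³ is continuously differentiable with compact support, then ∫_{ℝ³} cof(∇y(x)) : ∇v(x) dx = 0, where A : B := ∑_{i,j=1}^{3} A_{ij} B_{ij} denotes the Frobenius inner product of 3×3 matrices. -/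
open Matrix MeasureTheory

namespace WeakPiola

/-- Explicit formula for the cofactor entries, with cyclic `Fin 3` indices. -/
lemma cof_entry (A : Matrix (Fin 3) (Fin 3) ℝ) (i j : Fin 3) :
    cof A i j = A (i+1) (j+1) * A (i+2) (j+2) - A (i+1) (j+2) * A (i+2) (j+1) := by
  fin_cases i <;> fin_cases j <;> simp [cof, adjugate_fin_three] <;> ring

variable (y : (Fin 3 → ℝ) → Fin 3 → ℝ)

/-- Evaluation of an operator at `Pi.single p 1`, coordinate `q`, as a CLM. -/
noncomputable def Φ (q p : Fin 3) : (((Fin 3 → ℝ) →L[ℝ] (Fin 3 → ℝ)) →L[ℝ] ℝ) :=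
  (ContinuousLinearMap.proj q).comp
    (ContinuousLinearMap.apply ℝ (Fin 3 → ℝ) (Pi.single p 1))

/-- Entry `(q,p)` of the Jacobian of `y`, as a function of `x`. -/
noncomputable def g (q p : Fin 3) (x : Fin 3 → ℝ) : ℝ := fderiv ℝ y x (Pi.single p 1) q

/-- Candidate Fréchet derivative of `g y q p` at `x`. -/
noncomputable def G (q p : Fin 3) (x : Fin 3 → ℝ) : (Fin 3 → ℝ) →L[ℝ] ℝ :=
  (Φ q p).comp (fderiv ℝ (fderiv ℝ y) x)

/-- Second partial derivative `∂_j ∂_p y_q`. -/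
noncomputable def g' (q p j : Fin 3) (x : Fin 3 → ℝ) : ℝ :=
  fderiv ℝ (fderiv ℝ y) x (Pi.single j 1) (Pi.single p 1) q

lemma g_eq (q p : Fin 3) : g y q p = fun x => Φ q p (fderiv ℝ y x) := rfl

variable {y}

lemma hF1 (hy : ContDiff ℝ 2 y) : ContDiff ℝ 1 (fderiv ℝ y) := hy.fderiv_right (by norm_num)

lemma g_cd (hy : ContDiff ℝ 2 y) (q p : Fin 3) : ContDiff ℝ 1 (g y q p) :=
  (Φ q p).contDiff.comp (hF1 hy)

lemma g_has (hy : ContDiff ℝ 2 y) (q p : Fin 3) (x : Fin 3 → ℝ) :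
    HasFDerivAt (g y q p) (G y q p x) x :=
  (Φ q p).hasFDerivAt.comp x ((hF1 hy).differentiable one_ne_zero x).hasFDerivAt

lemma G_apply (q p j : Fin 3) (x : Fin 3 → ℝ) :
    G y q p x (Pi.single j 1) = g' y q p j x := rfl

lemma g'_symm (hy : ContDiff ℝ 2 y) (q p j : Fin 3) (x : Fin 3 → ℝ) :
    g' y q p j x = g' y q j p x := by
  have h2 := second_derivative_symmetric (f := y) (f' := fderiv ℝ y)
    (f'' := fderiv ℝ (fderiv ℝ y) x) (fun z => (hy.differentiable (by norm_num) z).hasFDerivAt)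
    (((hF1 hy).differentiable one_ne_zero x).hasFDerivAt) (Pi.single j 1) (Pi.single p 1)
  exact congrFun h2 q

/-- The `(i,j)` entry of the cofactor matrix of the Jacobian. -/
noncomputable def P (i j : Fin 3) (x : Fin 3 → ℝ) : ℝ := cof (jac y x) i j

lemma P_eq (i j : Fin 3) : P (y := y) i j = fun x =>
    g y (i+1) (j+1) x * g y (i+2) (j+2) x - g y (i+1) (j+2) x * g y (i+2) (j+1) x := by
  funext x; exact cof_entry (jac y x) i j

lemma P_cd (hy : ContDiff ℝ 2 y) (i j : Fin 3) : ContDiff ℝ 1 (P (y := y) i j) := by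
  rw [P_eq]
  exact ((g_cd hy _ _).mul (g_cd hy _ _)).sub ((g_cd hy _ _).mul (g_cd hy _ _))

lemma P_has (hy : ContDiff ℝ 2 y) (i j : Fin 3) (x : Fin 3 → ℝ) :
    HasFDerivAt (P (y := y) i j)
      ((g y (i+1) (j+1) x • G y (i+2) (j+2) x + g y (i+2) (j+2) x • G y (i+1) (j+1) x)
        - (g y (i+1) (j+2) x • G y (i+2) (j+1) x + g y (i+2) (j+1) x • G y (i+1) (j+2) x)) x := by
  rw [P_eq]
  exact ((g_has hy _ _ x).mul (g_has hy _ _ x)).sub ((g_has hy _ _ x).mul (g_has hy _ _ x))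

lemma P_fderiv (hy : ContDiff ℝ 2 y) (i j : Fin 3) (x : Fin 3 → ℝ) :
    fderiv ℝ (P (y := y) i j) x (Pi.single j 1)
      = g y (i+1) (j+1) x * g' y (i+2) (j+2) j x + g y (i+2) (j+2) x * g' y (i+1) (j+1) j x
        - (g y (i+1) (j+2) x * g' y (i+2) (j+1) j x + g y (i+2) (j+1) x * g' y (i+1) (j+2) j x) := by
  rw [(P_has hy i j x).fderiv]
  simp [ContinuousLinearMap.sub_apply, ContinuousLinearMap.add_apply,
    ContinuousLinearMap.smul_apply, G_apply, smul_eq_mul]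

/-- The pointwise Piola identity: each row of the cofactor matrix is divergence free. -/
lemma piola_pointwise (hy : ContDiff ℝ 2 y) (i : Fin 3) (x : Fin 3 → ℝ) :
    ∑ j : Fin 3, fderiv ℝ (P (y := y) i j) x (Pi.single j 1) = 0 := by
  rw [Fin.sum_univ_three, P_fderiv hy i 0 x, P_fderiv hy i 1 x, P_fderiv hy i 2 x]
  simp only [show (0+1 : Fin 3) = 1 from rfl, show (0+2 : Fin 3) = 2 from rfl,
    show (1+1 : Fin 3) = 2 from rfl, show (1+2 : Fin 3) = 0 from rfl,
    show (2+1 : Fin 3) = 0 from rfl, show (2+2 : Fin 3) = 1 from rfl]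
  linear_combination (g y (i+2) 2 x) * g'_symm hy (i+1) 1 0 x
    + (g y (i+1) 1 x) * g'_symm hy (i+2) 2 0 x
    + (g y (i+2) 0 x) * g'_symm hy (i+1) 2 1 x
    + (g y (i+1) 2 x) * g'_symm hy (i+2) 0 1 x
    + (g y (i+2) 1 x) * g'_symm hy (i+1) 0 2 x
    + (g y (i+1) 0 x) * g'_symm hy (i+2) 1 2 x

end WeakPiola

set_option maxHeartbeats 2000000 in
open WeakPiola in
/-- Weak form of the Piola identity: for `y` of class C² and `v` of class C¹ with
compact support, `∫ cof(∇y) : ∇v dx = 0`, where `:` is the Frobenius inner product. -/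
theorem weak_piola (y v : (Fin 3 → ℝ) → Fin 3 → ℝ)
    (hy : ContDiff ℝ 2 y) (hv : ContDiff ℝ 1 v) (hvsupp : HasCompactSupport v) :
    ∫ x : Fin 3 → ℝ, ∑ i : Fin 3, ∑ j : Fin 3, cof (jac y x) i j * jac v x i j = 0 := by
  have hvd : Differentiable ℝ v := hv.differentiable one_ne_zero
  -- coordinates of v
  set V : Fin 3 → (Fin 3 → ℝ) → ℝ := fun i x => v x i with hVdef
  have hV_cd : ∀ i, ContDiff ℝ 1 (V i) := fun i =>
    (ContinuousLinearMap.proj i : (Fin 3 → ℝ) →L[ℝ] ℝ).contDiff.comp hv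
  have hV_supp : ∀ i, HasCompactSupport (V i) := by
    intro i
    have h := hvsupp.comp_left (g := fun u : Fin 3 → ℝ => u i) rfl
    exact h
  have hV_has : ∀ i x, HasFDerivAt (V i)
      ((ContinuousLinearMap.proj i : (Fin 3 → ℝ) →L[ℝ] ℝ).comp (fderiv ℝ v x)) x := by
    intro i x
    have h := (ContinuousLinearMap.proj i : (Fin 3 → ℝ) →L[ℝ] ℝ).hasFDerivAt.comp x
      (hvd x).hasFDerivAt
    exact h
  have hjacv : ∀ x i j, jac v x i j = fderiv ℝ (V i) x (Pi.single j 1) := by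
    intro x i j
    rw [(hV_has i x).fderiv]
    rfl
  -- continuity and support facts
  have hfV_cont : ∀ i (j : Fin 3), Continuous fun x => fderiv ℝ (V i) x (Pi.single j 1) :=
    fun i j => (((hV_cd i).fderiv_right (m := 0) (by norm_num)).continuous).clm_apply
      continuous_const
  have hfV_supp : ∀ i (j : Fin 3),
      HasCompactSupport fun x => fderiv ℝ (V i) x (Pi.single j 1) := fun i j =>
    ((hV_supp i).fderiv (𝕜 := ℝ)).comp_left (g := fun L : (Fin 3 → ℝ) →L[ℝ] ℝ => L (Pi.single j 1)) rfl
  have hPf_cont : ∀ i (j : Fin 3), Continuous fun x => fderiv ℝ (P (y := y) i j) x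
      (Pi.single j 1) := fun i j =>
    (((P_cd hy i j).fderiv_right (m := 0) (by norm_num)).continuous).clm_apply continuous_const
  -- integrability
  have int1 : ∀ i j, Integrable (fun x => P (y := y) i j x * fderiv ℝ (V i) x (Pi.single j 1)) :=
    fun i j => (((P_cd hy i j).continuous).mul (hfV_cont i j)).integrable_of_hasCompactSupport
      ((hfV_supp i j).mul_left)
  have int2 : ∀ i j, Integrable (fun x => fderiv ℝ (P (y := y) i j) x (Pi.single j 1) * V i x) :=
    fun i j => ((hPf_cont i j).mul (hV_cd i).continuous).integrable_of_hasCompactSupport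
      ((hV_supp i).mul_left)
  have int3 : ∀ i j, Integrable (fun x => P (y := y) i j x * V i x) :=
    fun i j => (((P_cd hy i j).continuous).mul (hV_cd i).continuous).integrable_of_hasCompactSupport
      ((hV_supp i).mul_left)
  -- integration by parts
  have ibp : ∀ i j, ∫ x, P (y := y) i j x * fderiv ℝ (V i) x (Pi.single j 1)
      = - ∫ x, fderiv ℝ (P (y := y) i j) x (Pi.single j 1) * V i x := fun i j =>
    integral_mul_fderiv_eq_neg_fderiv_mul_of_integrable (int2 i j) (int1 i j) (int3 i j)
      (fun x _ => (P_cd hy i j).differentiable one_ne_zero x) (fun x _ => (hV_cd i).differentiable one_ne_zero x)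
  -- rewrite the integrand
  have hrw : (fun x => ∑ i : Fin 3, ∑ j : Fin 3, cof (jac y x) i j * jac v x i j)
      = fun x => ∑ i : Fin 3, ∑ j : Fin 3,
          P (y := y) i j x * fderiv ℝ (V i) x (Pi.single j 1) := by
    funext x
    refine Finset.sum_congr rfl fun i _ => Finset.sum_congr rfl fun j _ => ?_
    rw [hjacv x i j]
    rfl
  rw [hrw]
  rw [integral_finset_sum Finset.univ
    (fun i _ => integrable_finset_sum Finset.univ (fun j _ => int1 i j))]
  refine Finset.sum_eq_zero fun i _ => ?_
  rw [integral_finset_sum Finset.univ (fun j _ => int1 i j)]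
  calc ∑ j : Fin 3, ∫ x, P (y := y) i j x * fderiv ℝ (V i) x (Pi.single j 1)
      = ∑ j : Fin 3, - ∫ x, fderiv ℝ (P (y := y) i j) x (Pi.single j 1) * V i x :=
        Finset.sum_congr rfl fun j _ => ibp i j
    _ = - ∑ j : Fin 3, ∫ x, fderiv ℝ (P (y := y) i j) x (Pi.single j 1) * V i x := by
        rw [← Finset.sum_neg_distrib]
    _ = - ∫ x, ∑ j : Fin 3, fderiv ℝ (P (y := y) i j) x (Pi.single j 1) * V i x := by
        rw [integral_finset_sum Finset.univ (fun j _ => int2 i j)]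
    _ = 0 := by
        have hz : ∀ x, ∑ j : Fin 3, fderiv ℝ (P (y := y) i j) x (Pi.single j 1) * V i x = 0 := by
          intro x
          rw [← Finset.sum_mul, piola_pointwise hy i x, zero_mul]
        simp only [hz, integral_zero, neg_zero]
end

section
/- Polyconvexity of the regularizing term: for every real p ≥ 1, the function h : ℝ^{3×3} × (0,∞) → ℝ defined by h(H, d) = ‖H‖^p / d^{p−1}, where ‖·‖ is the Frobenius norm, is convex on the convex set ℝ^{3×3} × (0,∞). (Consequently F ↦ ‖cof F‖^p / (det F)^{p−1} is a polyconvex function of the deformation gradient.) -/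
open Matrix

/-- The Frobenius norm of a 3×3 real matrix. -/
noncomputable def frobNorm (A : Matrix (Fin 3) (Fin 3) ℝ) : ℝ :=
  Real.sqrt (∑ i : Fin 3, ∑ j : Fin 3, (A i j) ^ 2)

noncomputable def toEuc (A : Matrix (Fin 3) (Fin 3) ℝ) : EuclideanSpace ℝ (Fin 3 × Fin 3) :=
  (WithLp.equiv 2 _).symm (fun ij => A ij.1 ij.2)

lemma frobNorm_eq_norm (A : Matrix (Fin 3) (Fin 3) ℝ) : frobNorm A = ‖toEuc A‖ := by
  rw [EuclideanSpace.norm_eq, frobNorm]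
  congr 1
  rw [Fintype.sum_prod_type]
  refine Finset.sum_congr rfl fun i _ => Finset.sum_congr rfl fun j _ => ?_
  simp [toEuc, sq_abs]

lemma frobNorm_nonneg (A : Matrix (Fin 3) (Fin 3) ℝ) : 0 ≤ frobNorm A :=
  Real.sqrt_nonneg _

lemma frobNorm_add_le (a b : ℝ) (ha : 0 ≤ a) (hb : 0 ≤ b) (H₁ H₂ : Matrix (Fin 3) (Fin 3) ℝ) :
    frobNorm (a • H₁ + b • H₂) ≤ a * frobNorm H₁ + b * frobNorm H₂ := by
  have h : toEuc (a • H₁ + b • H₂) = a • toEuc H₁ + b • toEuc H₂ := by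
    ext ij; simp [toEuc, Matrix.add_apply, Matrix.smul_apply]
  rw [frobNorm_eq_norm, frobNorm_eq_norm, frobNorm_eq_norm, h]
  calc ‖a • toEuc H₁ + b • toEuc H₂‖ ≤ ‖a • toEuc H₁‖ + ‖b • toEuc H₂‖ := norm_add_le _ _
    _ = a * ‖toEuc H₁‖ + b * ‖toEuc H₂‖ := by
        rw [norm_smul, norm_smul, Real.norm_eq_abs, Real.norm_eq_abs, abs_of_nonneg ha,
          abs_of_nonneg hb]

lemma perspective_aux (p : ℝ) (hp : 1 ≤ p) (x d : ℝ) (hx : 0 ≤ x) (hd : 0 < d) :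
    d * (x / d) ^ p = x ^ p / d ^ (p - 1) := by
  rw [Real.div_rpow hx hd.le, Real.rpow_sub hd, Real.rpow_one]
  have h1 : (0:ℝ) < d ^ p := Real.rpow_pos_of_pos hd p
  field_simp

/-- Polyconvexity of the regularizing term: for every real `p ≥ 1`, the function
`(H, d) ↦ ‖H‖^p / d^(p-1)` (Frobenius norm) is convex on `ℝ^{3×3} × (0,∞)`. -/
theorem convexOn_regularizer (p : ℝ) (hp : 1 ≤ p) :
    ConvexOn ℝ {q : Matrix (Fin 3) (Fin 3) ℝ × ℝ | 0 < q.2}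
      (fun q => frobNorm q.1 ^ p / q.2 ^ (p - 1)) := by
  constructor
  · rintro ⟨H₁, d₁⟩ h1 ⟨H₂, d₂⟩ h2 a b ha hb hab
    simp only [Set.mem_setOf_eq] at *
    rcases eq_or_lt_of_le ha with h | h
    · have hb1 : b = 1 := by linarith
      simpa [← h, hb1] using h2
    · have h1' := mul_pos h h1
      have := mul_nonneg hb h2.le
      simpa using by nlinarith
  rintro ⟨H₁, d₁⟩ h1 ⟨H₂, d₂⟩ h2 a b ha hb hab
  simp only [Set.mem_setOf_eq] at h1 h2
  simp only [Prod.smul_mk, Prod.mk_add_mk, smul_eq_mul]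
  set x₁ := frobNorm H₁ with hx₁
  set x₂ := frobNorm H₂ with hx₂
  have hx₁0 : 0 ≤ x₁ := frobNorm_nonneg _
  have hx₂0 : 0 ≤ x₂ := frobNorm_nonneg _
  set D := a * d₁ + b * d₂ with hD
  have hD0 : 0 < D := by
    rcases eq_or_lt_of_le ha with h | h
    · have hb1 : b = 1 := by linarith
      simp only [hD, ← h, hb1]; simpa using h2
    · nlinarith [mul_nonneg hb h2.le]
  have hs0 : 0 ≤ a * x₁ + b * x₂ := by positivity
  -- Step 1: triangle inequality + monotonicity of rpow
  have step1 : frobNorm (a • H₁ + b • H₂) ^ p / D ^ (p - 1)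
      ≤ (a * x₁ + b * x₂) ^ p / D ^ (p - 1) := by
    have hle := Real.rpow_le_rpow (frobNorm_nonneg _) (frobNorm_add_le a b ha hb H₁ H₂)
      (by linarith : (0:ℝ) ≤ p)
    exact (div_le_div_iff_of_pos_right (Real.rpow_pos_of_pos hD0 _)).mpr hle
  -- Step 2: perspective inequality
  have hmem₁ : x₁ / d₁ ∈ Set.Ici (0:ℝ) := Set.mem_Ici.mpr (div_nonneg hx₁0 h1.le)
  have hmem₂ : x₂ / d₂ ∈ Set.Ici (0:ℝ) := Set.mem_Ici.mpr (div_nonneg hx₂0 h2.le)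
  have hw₁ : 0 ≤ a * d₁ / D := by positivity
  have hw₂ : 0 ≤ b * d₂ / D := by positivity
  have hwsum : a * d₁ / D + b * d₂ / D = 1 := by
    field_simp
    exact hD.symm
  have hkey := (convexOn_rpow hp).2 hmem₁ hmem₂ hw₁ hw₂ hwsum
  simp only [smul_eq_mul] at hkey
  have harg : a * d₁ / D * (x₁ / d₁) + b * d₂ / D * (x₂ / d₂) = (a * x₁ + b * x₂) / D := by
    field_simp
  rw [harg] at hkey
  have hmul := mul_le_mul_of_nonneg_left hkey hD0.le
  rw [perspective_aux p hp _ _ hs0 hD0] at hmul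
  refine step1.trans ?_
  calc (a * x₁ + b * x₂) ^ p / D ^ (p - 1)
      ≤ D * (a * d₁ / D * (x₁ / d₁) ^ p + b * d₂ / D * (x₂ / d₂) ^ p) := hmul
    _ = a * (d₁ * (x₁ / d₁) ^ p) + b * (d₂ * (x₂ / d₂) ^ p) := by
        field_simp
    _ = a * (x₁ ^ p / d₁ ^ (p - 1)) + b * (x₂ ^ p / d₂ ^ (p - 1)) := by
        rw [perspective_aux p hp _ _ hx₁0 h1, perspective_aux p hp _ _ hx₂0 h2]
end

section
/- Two-sided energy inequality for incremental minimization: let Q be a nonempty set, let D : Q × Q → ℝ satisfy D ≥ 0, D(q,q) = 0 for all q, and D(q,q') = D(q',q) for all q, q', and let E : ℝ × Q → ℝ be such that for each q ∈ Q the map θ ↦ E(θ, q) is continuously differentiable. Fix real numbers s < t and elements q₀, q₁ ∈ Q, and assume: (i) stability of q₀ at time s, i.e. E(s, q₀) ≤ E(s, q) + D(q₀, q) for all q ∈ Q; (ii) incremental minimality of q₁ at time t, i.e. E(t, q₁) + D(q₀, q₁) ≤ E(t, q) + D(q₀, q) for all q ∈ Q. Then ∫_s^t ∂_θ E(θ,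 q₁) dθ ≤ E(t, q₁) + D(q₀, q₁) − E(s, q₀) ≤ ∫_s^t ∂_θ E(θ, q₀) dθ. -/
open MeasureTheory intervalIntegral

/-- Two-sided energy inequality for incremental minimization: if `q₀` is stable at
time `s` and `q₁` minimizes `E(t,·) + D(q₀,·)`, then
`∫_s^t ∂_θ E(θ,q₁) dθ ≤ E(t,q₁) + D(q₀,q₁) − E(s,q₀) ≤ ∫_s^t ∂_θ E(θ,q₀) dθ`. -/
theorem two_sided_energy_inequality {Q : Type*} [Nonempty Q]
    (D : Q → Q → ℝ)
    (hDnonneg : ∀ q q' : Q, 0 ≤ D q q')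
    (hDdiag : ∀ q : Q, D q q = 0)
    (hDsymm : ∀ q q' : Q, D q q' = D q' q)
    (E : ℝ → Q → ℝ)
    (hE : ∀ q : Q, ContDiff ℝ 1 fun θ => E θ q)
    (s t : ℝ) (hst : s < t) (q₀ q₁ : Q)
    (hstable : ∀ q : Q, E s q₀ ≤ E s q + D q₀ q)
    (hmin : ∀ q : Q, E t q₁ + D q₀ q₁ ≤ E t q + D q₀ q) :
    (∫ θ in s..t, deriv (fun θ => E θ q₁) θ) ≤ E t q₁ + D q₀ q₁ - E s q₀ ∧
      E t q₁ + D q₀ q₁ - E s q₀ ≤ ∫ θ in s..t, deriv (fun θ => E θ q₀) θ := by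
  have key : ∀ q : Q, (∫ θ in s..t, deriv (fun θ => E θ q) θ) = E t q - E s q := by
    intro q
    apply intervalIntegral.integral_deriv_eq_sub
    · intro x _
      exact (hE q).differentiable one_ne_zero x
    · exact ((hE q).continuous_deriv le_rfl).intervalIntegrable s t
  constructor
  · rw [key q₁]
    have := hstable q₁
    linarith
  · rw [key q₀]
    have := hmin q₀
    rw [hDdiag q₀] at this
    linarith
end

section
/- Weak lower semicontinuity of convex integral functionals: let Ω ⊂ ℝⁿ be a measurable set of finite Lebesgue measure, let h : ℝ^m → ℝ be convex and nonnegative, and let u_j, u : Ω → ℝ^m be integrable functions such that u_j converges weakly to u in L¹, i.e. ∫_Ω u_j(x)·g(x) dx → ∫_Ω u(x)·g(x) dx for every bounded measurable g : Ω → ℝ^m. Then liminf_{j→∞} ∫_Ω h(u_j(x)) dx ≥ ∫_Ω h(u(x)) dx (the integrals of h(u_j) and h(u) taken with values in [0, ∞]). -/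
open MeasureTheory Filter Topology


lemma exists_subgrad {m : ℕ} (h : (Fin m → ℝ) → ℝ) (hconv : ConvexOn ℝ Set.univ h)
    (hcont : Continuous h) (q : Fin m → ℝ) :
    ∃ p : Fin m → ℝ, ∀ y, h q + ∑ i, p i * (y i - q i) ≤ h y := by
  set S : Set ((Fin m → ℝ) × ℝ) := {z | h z.1 < z.2} with hS
  have hSconv : Convex ℝ S := by
    have := hconv.convex_strict_epigraph
    simpa [Set.setOf_and] using this
  have hSopen : IsOpen S := isOpen_lt (hcont.comp continuous_fst) continuous_snd
  have hq : (q, h q) ∉ S := by simp [hS]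
  obtain ⟨f, hf⟩ := geometric_hahn_banach_open_point hSconv hSopen hq
  set c : ℝ := f (0, 1) with hc
  have hfsplit : ∀ y t, f (y, t) = f (y, 0) + t * c := by
    intro y t
    have h0 : (y, t) = (y, (0:ℝ)) + t • ((0 : Fin m → ℝ), (1:ℝ)) := by
      simp [Prod.ext_iff]
    rw [h0, map_add, f.map_smul]; simp [hc]
  have hc0 : c ≠ 0 → True := fun _ => trivial
  have hcneg : c < 0 := by
    have h1 := hf (q, h q + 1) (by simp [hS])
    rw [hfsplit q (h q + 1), show f (q, h q) = f (q, 0) + (h q) * c from hfsplit q (h q)] at h1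
    nlinarith
  have key : ∀ y, f (y, 0) + c * h y ≤ f (q, 0) + c * h q := by
    intro y
    by_contra hcon
    push_neg at hcon
    set δ : ℝ := (f (y, 0) + c * h y - (f (q, 0) + c * h q)) / (2 * (-c)) with hδ
    have hδpos : 0 < δ := by
      apply div_pos (by linarith) (by linarith)
    have h3 := hf (y, h y + δ) (by simp [hS, hδpos])
    rw [hfsplit y (h y + δ), show f (q, h q) = f (q, 0) + (h q) * c from hfsplit q (h q)] at h3
    have hcne : c ≠ 0 := ne_of_lt hcneg
    have hcd : c * δ = -(f (y, 0) + c * h y - (f (q, 0) + c * h q)) / 2 := by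
      rw [hδ]
      field_simp
    nlinarith
  refine ⟨fun i => f (Pi.single i 1, 0) / (-c), fun y => ?_⟩
  have hlin : ∀ z : Fin m → ℝ, f (z, 0) = ∑ i, z i * f (Pi.single i 1, 0) := by
    intro z
    have h1 : ((z, (0:ℝ)) : (Fin m → ℝ) × ℝ) = ∑ i, z i • ((Pi.single i 1 : Fin m → ℝ), (0:ℝ)) := by
      rw [Prod.ext_iff]
      constructor
      · simp only [Prod.fst_sum, Prod.smul_mk]
        ext j
        rw [Finset.sum_apply]
        simp [Pi.single_apply]
      · simp only [Prod.snd_sum, Prod.smul_mk]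
        simp
    rw [h1, map_sum]
    refine Finset.sum_congr rfl fun i _ => ?_
    rw [f.map_smul]; simp [mul_comm]
  have h2 : ∑ i, (f (Pi.single i 1, 0) / (-c)) * (y i - q i)
      = (f (y, 0) - f (q, 0)) / (-c) := by
    rw [hlin y, hlin q, ← Finset.sum_sub_distrib, Finset.sum_div]
    congr 1; ext i; ring
  rw [h2]
  have hne : (0:ℝ) < -c := by linarith
  have h4 : (f (y, 0) - f (q, 0)) / (-c) ≤ h y - h q := by
    rw [div_le_iff₀ hne]
    nlinarith [key y]
  linarith


lemma exists_affine_family {m : ℕ} (h : (Fin m → ℝ) → ℝ) (hconv : ConvexOn ℝ Set.univ h)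
    (hnonneg : ∀ a, 0 ≤ h a) :
    ∃ (b : ℕ → ℝ) (c : ℕ → Fin m → ℝ), b 0 = 0 ∧ c 0 = 0 ∧
      (∀ k y, b k + ∑ i, c k i * y i ≤ h y) ∧
      (∀ a, ∀ ε > 0, ∃ k, h a - ε ≤ b k + ∑ i, c k i * a i) := by
  have hcont : Continuous h := by
    rw [← continuousOn_univ]
    exact hconv.continuousOn isOpen_univ
  obtain ⟨D, hDc, hDd⟩ := TopologicalSpace.exists_countable_dense (Fin m → ℝ)
  have hDne : D.Nonempty := hDd.nonempty
  obtain ⟨e, he⟩ := Set.Countable.exists_eq_range hDc hDne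
  have hsub : ∀ k : ℕ, ∃ p : Fin m → ℝ, ∀ y, h (e k) + ∑ i, p i * (y i - e k i) ≤ h y :=
    fun k => exists_subgrad h hconv hcont (e k)
  choose p hp using hsub
  have hsplit : ∀ k (y : Fin m → ℝ),
      ∑ i, p k i * (y i - e k i) = ∑ i, p k i * y i - ∑ i, p k i * e k i := by
    intro k y
    rw [← Finset.sum_sub_distrib]
    exact Finset.sum_congr rfl fun i _ => by ring
  refine ⟨fun k => Nat.rec 0 (fun k _ => h (e k) - ∑ i, p k i * e k i) k,
          fun k => Nat.rec 0 (fun k _ => p k) k, rfl, rfl, ?_, ?_⟩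
  · rintro (_ | k) y
    · simpa using hnonneg y
    · have h1 := hp k y
      rw [hsplit k y] at h1
      simp only [Nat.rec_add_one]
      linarith
  · intro a ε hε
    obtain ⟨z, hz, hzmax'⟩ := (isCompact_closedBall a 2).exists_isMaxOn
      ⟨a, Metric.mem_closedBall_self (by norm_num)⟩ hcont.continuousOn
    have hzmax : ∀ y ∈ Metric.closedBall a 2, h y ≤ h z := fun y hy => hzmax' hy
    set M : ℝ := h z with hM
    have hMnonneg : 0 ≤ M := hnonneg z
    have hpbound : ∀ k, dist (e k) a ≤ 1 → ∑ i, |p k i| ≤ M := by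
      intro k hk
      set v : Fin m → ℝ := fun i => if 0 ≤ p k i then 1 else -1 with hv
      have hvnorm : ‖v‖ ≤ 1 := by
        apply pi_norm_le_iff_of_nonneg (by norm_num) |>.2
        intro i
        rw [hv]
        dsimp only
        split <;> simp
      have hmem : e k + v ∈ Metric.closedBall a 2 := by
        rw [Metric.mem_closedBall]
        calc dist (e k + v) a ≤ dist (e k + v) (e k) + dist (e k) a := dist_triangle _ _ _
        _ ≤ 1 + 1 := by
            rw [dist_eq_norm]
            simp only [add_sub_cancel_left]
            exact add_le_add hvnorm hk
        _ = 2 := by norm_num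
      have h1 := hp k (e k + v)
      have h2 : ∑ i, p k i * ((e k + v) i - e k i) = ∑ i, |p k i| := by
        refine Finset.sum_congr rfl fun i _ => ?_
        simp only [Pi.add_apply, add_sub_cancel_left, hv]
        rcases le_or_gt 0 (p k i) with h' | h'
        · simp [h', abs_of_nonneg h']
        · simp [not_le.2 h', abs_of_neg h']
      rw [h2] at h1
      have h3 := hzmax (e k + v) hmem
      have h4 := hnonneg (e k)
      linarith
    have hca : ContinuousAt h a := hcont.continuousAt
    rw [Metric.continuousAt_iff] at hca
    obtain ⟨δ, hδpos, hδ⟩ := hca (ε / 2) (by linarith)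
    set r : ℝ := min δ (min 1 (ε / (2 * (M + 1)))) with hr
    have hrpos : 0 < r := by
      apply lt_min hδpos
      apply lt_min one_pos
      positivity
    obtain ⟨q, hqD, hq⟩ := hDd.exists_dist_lt a hrpos
    rw [he, Set.mem_range] at hqD
    obtain ⟨k, rfl⟩ := hqD
    refine ⟨k + 1, ?_⟩
    simp only [Nat.rec_add_one]
    have hd : dist (e k) a < r := by rwa [dist_comm] at hq
    have h5 : |h (e k) - h a| < ε / 2 := by
      have := hδ (show dist (e k) a < δ from lt_of_lt_of_le hd (min_le_left _ _))
      rwa [Real.dist_eq] at this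
    have h6 : |∑ i, p k i * (a i - e k i)| ≤ ε / 2 := by
      have hMr : M * r ≤ ε / 2 := by
        have hr2 : r ≤ ε / (2 * (M + 1)) := le_trans (min_le_right _ _) (min_le_right _ _)
        have : M * r ≤ M * (ε / (2 * (M + 1))) := mul_le_mul_of_nonneg_left hr2 hMnonneg
        have h7 : M * (ε / (2 * (M + 1))) ≤ ε / 2 := by
          rw [mul_div_assoc', div_le_div_iff₀ (by positivity) (by norm_num)]
          nlinarith
        linarith
      calc |∑ i, p k i * (a i - e k i)| ≤ ∑ i, |p k i * (a i - e k i)| :=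
            Finset.abs_sum_le_sum_abs _ _
      _ ≤ ∑ i, |p k i| * r := by
            refine Finset.sum_le_sum fun i _ => ?_
            rw [abs_mul]
            refine mul_le_mul_of_nonneg_left ?_ (abs_nonneg _)
            have h8 : |a i - e k i| = ‖(a - e k) i‖ := by simp [Real.norm_eq_abs]
            rw [h8]
            calc ‖(a - e k) i‖ ≤ ‖a - e k‖ := norm_le_pi_norm _ i
            _ = dist (e k) a := by rw [dist_eq_norm, ← norm_neg]; congr 1; abel
            _ ≤ r := hd.le
      _ = (∑ i, |p k i|) * r := by rw [Finset.sum_mul]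
      _ ≤ M * r := mul_le_mul_of_nonneg_right
            (hpbound k (le_trans hd.le (le_trans (min_le_right _ _) (min_le_left _ _))))
            hrpos.le
      _ ≤ ε / 2 := hMr
    have h9 := hsplit k a
    have h10 := abs_le.1 h6
    have h11 := abs_lt.1 h5
    linarith [h10.1, h10.2, h11.1, h11.2]


lemma ofReal_integral_le_lintegral {α : Type*} [MeasurableSpace α] {μ : Measure α} {f : α → ℝ}
    (hf : Integrable f μ) : ENNReal.ofReal (∫ x, f x ∂μ) ≤ ∫⁻ x, ENNReal.ofReal (f x) ∂μ := by
  calc ENNReal.ofReal (∫ x, f x ∂μ) ≤ ENNReal.ofReal (∫ x, max (f x) 0 ∂μ) :=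
        ENNReal.ofReal_le_ofReal (integral_mono hf hf.pos_part (fun x => le_max_left _ _))
  _ = ∫⁻ x, ENNReal.ofReal (max (f x) 0) ∂μ :=
        ofReal_integral_eq_lintegral_ofReal hf.pos_part
          (Eventually.of_forall fun x => le_max_right _ _)
  _ = ∫⁻ x, ENNReal.ofReal (f x) ∂μ := by
        refine lintegral_congr fun x => ?_
        rcases le_total 0 (f x) with h' | h'
        · rw [max_eq_left h']
        · rw [max_eq_right h', ENNReal.ofReal_zero, ENNReal.ofReal_of_nonpos h']

/-- Weak lower semicontinuity of convex integral functionals: if `h : ℝ^m → ℝ` is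
convex and nonnegative and `u_j ⇀ u` weakly in `L¹(Ω; ℝ^m)` (tested against all
bounded measurable `g`), then `liminf_j ∫_Ω h(u_j) ≥ ∫_Ω h(u)`, the integrals of
`h(u_j)`, `h(u)` taken with values in `[0,∞]`. -/
theorem weak_lsc_convex_integral (n m : ℕ)
    (Ω : Set (Fin n → ℝ)) (hΩmeas : MeasurableSet Ω) (hΩfin : volume Ω < ⊤)
    (h : (Fin m → ℝ) → ℝ) (hconv : ConvexOn ℝ Set.univ h) (hnonneg : ∀ a, 0 ≤ h a)
    (u : ℕ → (Fin n → ℝ) → Fin m → ℝ) (u₀ : (Fin n → ℝ) → Fin m → ℝ)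
    (huint : ∀ j, IntegrableOn (u j) Ω) (hu₀int : IntegrableOn u₀ Ω)
    (hweak : ∀ g : (Fin n → ℝ) → Fin m → ℝ, Measurable g → (∃ C : ℝ, ∀ x, ‖g x‖ ≤ C) →
      Tendsto (fun j => ∫ x in Ω, ∑ i : Fin m, u j x i * g x i) atTop
        (𝓝 (∫ x in Ω, ∑ i : Fin m, u₀ x i * g x i))) :
    (∫⁻ x in Ω, ENNReal.ofReal (h (u₀ x))) ≤
      atTop.liminf fun j => ∫⁻ x in Ω, ENNReal.ofReal (h (u j x)) := by
  classical
  obtain ⟨b, c, hb0, hc0, hmin, happrox⟩ := exists_affine_family h hconv hnonneg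
  set ℓ : ℕ → (Fin m → ℝ) → ℝ := fun k a => b k + ∑ i, c k i * a i with hℓ
  have hℓ0 : ∀ a, ℓ 0 a = 0 := by intro a; simp [hℓ, hb0, hc0]
  have hℓmeas : ∀ k, Measurable (ℓ k) := by
    intro k
    exact measurable_const.add
      (Finset.measurable_sum _ fun i _ => by fun_prop)
  haveI : IsFiniteMeasure (volume.restrict Ω) :=
    ⟨by rw [Measure.restrict_apply_univ]; exact hΩfin⟩
  -- measurable representative of u₀
  have hu₀m := hu₀int.aestronglyMeasurable
  set u₀' := hu₀m.mk u₀ with hu₀'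
  have hu₀'meas : Measurable u₀' := hu₀m.stronglyMeasurable_mk.measurable
  have hu₀'ae : u₀ =ᵐ[volume.restrict Ω] u₀' := hu₀m.ae_eq_mk
  -- the maxima
  set H : ℕ → (Fin m → ℝ) → ℝ :=
    fun K a => (Finset.range (K + 1)).sup' Finset.nonempty_range_add_one (fun k => ℓ k a) with hH
  have hHmeas : ∀ K, Measurable (H K) := by
    intro K
    have h1 := Finset.measurable_range_sup' (f := ℓ) (n := K) (fun k _ => hℓmeas k)
    have h2 : H K = (Finset.range (K + 1)).sup' Finset.nonempty_range_add_one ℓ := by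
      funext a
      rw [Finset.sup'_apply]
    rw [h2]; exact h1
  have hHle : ∀ K a, H K a ≤ h a := fun K a =>
    Finset.sup'_le _ _ fun k _ => hmin k a
  have hHnonneg : ∀ K a, 0 ≤ H K a := fun K a =>
    le_trans (le_of_eq (hℓ0 a).symm)
      (Finset.le_sup' (fun k => ℓ k a) (Finset.mem_range.2 (Nat.succ_pos K)))
  have hHmono : ∀ K K', K ≤ K' → ∀ a, H K a ≤ H K' a := by
    intro K K' hKK a
    exact Finset.sup'_le _ _ fun k hk =>
      Finset.le_sup' (fun k => ℓ k a)
        (Finset.mem_range.2 (lt_of_lt_of_le (Finset.mem_range.1 hk) (Nat.succ_le_succ hKK)))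
  -- key step for fixed K
  have key : ∀ K : ℕ,
      (∫⁻ x in Ω, ENNReal.ofReal (H K (u₀' x))) ≤
        atTop.liminf fun j => ∫⁻ x in Ω, ENNReal.ofReal (h (u j x)) := by
    intro K
    have hex : ∀ a : Fin m → ℝ, ∃ k, k ∈ Finset.range (K + 1) ∧ H K a = ℓ k a := fun a =>
      Finset.exists_mem_eq_sup' Finset.nonempty_range_add_one (fun k => ℓ k a)
    set κ : (Fin m → ℝ) → ℕ := fun a => Nat.find (hex a) with hκ
    have hκspec : ∀ a, κ a ∈ Finset.range (K + 1) ∧ H K a = ℓ (κ a) a := fun a =>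
      Nat.find_spec (hex a)
    have hκmeas : Measurable κ := by
      apply measurable_to_countable'
      intro k
      have hset : κ ⁻¹' {k} =
          ({a | k ∈ Finset.range (K + 1)} ∩ {a | H K a = ℓ k a}) ∩
            ⋂ j ∈ Finset.range k, ({a | j ∈ Finset.range (K + 1)} ∩ {a | H K a = ℓ j a})ᶜ := by
        ext a
        simp only [Set.mem_preimage, Set.mem_singleton_iff, hκ, Nat.find_eq_iff,
          Set.mem_inter_iff, Set.mem_setOf_eq, Set.mem_iInter, Set.mem_compl_iff,
          Finset.mem_range, not_and]
      rw [hset]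
      refine MeasurableSet.inter (MeasurableSet.inter (MeasurableSet.const _) ?_) ?_
      · exact measurableSet_eq_fun (hHmeas K) (hℓmeas k)
      · refine MeasurableSet.iInter fun j => MeasurableSet.iInter fun _ => ?_
        exact ((MeasurableSet.const _).inter (measurableSet_eq_fun (hHmeas K) (hℓmeas j))).compl
    -- the test function
    set g : (Fin n → ℝ) → Fin m → ℝ := fun x => c (κ (u₀' x)) with hg
    set β : (Fin n → ℝ) → ℝ := fun x => b (κ (u₀' x)) with hβ
    have hgmeas : Measurable g := measurable_from_top.comp (hκmeas.comp hu₀'meas)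
    have hβmeas : Measurable β := measurable_from_top.comp (hκmeas.comp hu₀'meas)
    have hgbdd : ∃ C : ℝ, ∀ x, ‖g x‖ ≤ C := by
      refine ⟨(Finset.range (K + 1)).sup' Finset.nonempty_range_add_one (fun k => ‖c k‖),
        fun x => ?_⟩
      exact Finset.le_sup' (fun k => ‖c k‖) (hκspec (u₀' x)).1
    have hβbdd : ∃ C : ℝ, ∀ x, ‖β x‖ ≤ C := by
      refine ⟨(Finset.range (K + 1)).sup' Finset.nonempty_range_add_one (fun k => ‖b k‖),
        fun x => ?_⟩
      exact Finset.le_sup' (fun k => ‖b k‖) (hκspec (u₀' x)).1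
    -- pointwise identities
    have hpt : ∀ (x : Fin n → ℝ) (a : Fin m → ℝ),
        β x + ∑ i, a i * g x i = ℓ (κ (u₀' x)) a := by
      intro x a
      simp only [hβ, hg, hℓ]
      congr 1
      exact Finset.sum_congr rfl fun i _ => mul_comm _ _
    have hle_h : ∀ (x : Fin n → ℝ) (a : Fin m → ℝ), β x + ∑ i, a i * g x i ≤ h a := by
      intro x a; rw [hpt]; exact hmin _ a
    have heqH : ∀ x : Fin n → ℝ, β x + ∑ i, u₀' x i * g x i = H K (u₀' x) := by
      intro x; rw [hpt]; exact (hκspec (u₀' x)).2.symm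
    -- integrability
    have hβint : IntegrableOn β Ω := by
      obtain ⟨Cb, hCb⟩ := hβbdd
      exact Integrable.mono' (integrable_const Cb) hβmeas.aestronglyMeasurable
        (Eventually.of_forall fun x => hCb x)
    have hsumint : ∀ (w : (Fin n → ℝ) → Fin m → ℝ), IntegrableOn w Ω →
        IntegrableOn (fun x => ∑ i, w x i * g x i) Ω := by
      intro w hw
      apply integrable_finset_sum
      intro i _
      have h1 : Integrable (fun x => w x i) (volume.restrict Ω) :=
        (ContinuousLinearMap.proj (R := ℝ) (φ := fun _ : Fin m => ℝ) i).integrable_comp hw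
      have h2 : Integrable (fun x => g x i * w x i) (volume.restrict Ω) := by
        obtain ⟨C, hC⟩ := hgbdd
        exact h1.bdd_mul ((hgmeas.eval).aestronglyMeasurable)
          (Eventually.of_forall fun x => le_trans (norm_le_pi_norm (g x) i) (hC x))
      exact h2.congr (Eventually.of_forall fun x => mul_comm _ _)
    have hFint : ∀ j, IntegrableOn (fun x => β x + ∑ i, u j x i * g x i) Ω := fun j =>
      hβint.add (hsumint (u j) (huint j))
    have hF₀int : IntegrableOn (fun x => β x + ∑ i, u₀ x i * g x i) Ω :=
      hβint.add (hsumint u₀ hu₀int)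
    -- convergence of integrals
    have hlim : Tendsto (fun j => ∫ x in Ω, (β x + ∑ i, u j x i * g x i)) atTop
        (𝓝 (∫ x in Ω, (β x + ∑ i, u₀ x i * g x i))) := by
      have hw := hweak g hgmeas hgbdd
      have hsplit : ∀ (w : (Fin n → ℝ) → Fin m → ℝ) (hw : IntegrableOn w Ω),
          ∫ x in Ω, (β x + ∑ i, w x i * g x i) =
            (∫ x in Ω, β x) + ∫ x in Ω, ∑ i, w x i * g x i := fun w hw =>
        integral_add hβint (hsumint w hw)
      rw [hsplit u₀ hu₀int]
      have := hw.const_add (∫ x in Ω, β x)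
      refine Tendsto.congr (fun j => ?_) this
      rw [hsplit (u j) (huint j)]
    -- comparison
    have hstep : ∀ j, ENNReal.ofReal (∫ x in Ω, (β x + ∑ i, u j x i * g x i)) ≤
        ∫⁻ x in Ω, ENNReal.ofReal (h (u j x)) := by
      intro j
      refine le_trans (ofReal_integral_le_lintegral (hFint j)) (lintegral_mono fun x => ?_)
      exact ENNReal.ofReal_le_ofReal (hle_h x (u j x))
    -- conclude
    have heq1 : ∫ x in Ω, (β x + ∑ i, u₀ x i * g x i) = ∫ x in Ω, H K (u₀' x) := by
      refine integral_congr_ae ?_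
      filter_upwards [hu₀'ae] with x hx
      rw [hx, heqH x]
    have hHint : IntegrableOn (fun x => H K (u₀' x)) Ω := by
      refine hF₀int.congr ?_
      filter_upwards [hu₀'ae] with x hx
      rw [hx, heqH x]
    have heq2 : ENNReal.ofReal (∫ x in Ω, H K (u₀' x)) =
        ∫⁻ x in Ω, ENNReal.ofReal (H K (u₀' x)) :=
      ofReal_integral_eq_lintegral_ofReal hHint
        (Eventually.of_forall fun x => hHnonneg K (u₀' x))
    rw [← heq2, ← heq1]
    have hlim2 : Tendsto (fun j => ENNReal.ofReal (∫ x in Ω, (β x + ∑ i, u j x i * g x i)))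
        atTop (𝓝 (ENNReal.ofReal (∫ x in Ω, (β x + ∑ i, u₀ x i * g x i)))) :=
      (ENNReal.continuous_ofReal.tendsto _).comp hlim
    rw [← hlim2.liminf_eq]
    exact liminf_le_liminf (Eventually.of_forall hstep)
  -- assemble via monotone convergence
  have hae : (∫⁻ x in Ω, ENNReal.ofReal (h (u₀ x))) =
      ∫⁻ x in Ω, ENNReal.ofReal (h (u₀' x)) := by
    refine lintegral_congr_ae ?_
    filter_upwards [hu₀'ae] with x hx
    rw [hx]
  rw [hae]
  have hsup : (∫⁻ x in Ω, ENNReal.ofReal (h (u₀' x))) =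
      ⨆ K, ∫⁻ x in Ω, ENNReal.ofReal (H K (u₀' x)) := by
    rw [← lintegral_iSup]
    · refine lintegral_congr fun x => ?_
      set a := u₀' x
      refine le_antisymm ?_ (iSup_le fun K => ENNReal.ofReal_le_ofReal (hHle K a))
      refine ENNReal.le_of_forall_pos_le_add fun ε hε hlt => ?_
      obtain ⟨k, hk⟩ := happrox a ε (by exact_mod_cast hε)
      calc ENNReal.ofReal (h a) = ENNReal.ofReal ((h a - ε) + ε) := by ring_nf
      _ ≤ ENNReal.ofReal (h a - ε) + ENNReal.ofReal ε := ENNReal.ofReal_add_le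
      _ ≤ ENNReal.ofReal (ℓ k a) + ε := by
          rw [ENNReal.ofReal_coe_nnreal]
          exact add_le_add_left (ENNReal.ofReal_le_ofReal hk) _
      _ ≤ ENNReal.ofReal (H k a) + ε := by
          refine add_le_add_left (ENNReal.ofReal_le_ofReal ?_) _
          exact Finset.le_sup' (fun k' => ℓ k' a) (Finset.mem_range.2 (Nat.lt_succ_self k))
      _ ≤ (⨆ K, ENNReal.ofReal (H K a)) + ε := add_le_add_left (le_iSup (fun K => ENNReal.ofReal (H K a)) k) _
    · intro K
      exact (ENNReal.measurable_ofReal.comp ((hHmeas K).comp hu₀'meas))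
    · intro K K' hKK x
      exact ENNReal.ofReal_le_ofReal (hHmono K K' hKK (u₀' x))
  rw [hsup]
  exact iSup_le key
end
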